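/- arXiv:1511.06999 — 2 statements merged into one kernel-verified Lean document; each statement's English description precedes it below -/
import Mathlib

section
/- Suppose assumptions (A1), (A2), (A3), (A4), (A6), and (A7) hold, and let ε̄₀ > 0 be as given by the smallness lemma (so that every solution with parameter ε < ε̄₀ satisfies sup|ε(u − u'')| < 1/2). Then for every fixed 0 < ε < ε̄₀ there exists a constant C̃ > 0, depending only on ε, γ, α, the constants of (A1), (A2), (A7), and on the C² norm of V, such that every solution (u, m) of Problem 1 with parameter ε satisfies both ∫₀¹ 1/m(x) dx ≤ C̃ and ∫₀¹ (m'(x)/m(x))² dx ≤ C̃. -/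
open Set intervalIntegral

noncomputable section

/-- `f : ℝ → ℝ` is ½-Hölder continuous: there is `K ≥ 0` with
`|f x - f y| ≤ K * |x - y| ^ (1/2)` for all `x y`. -/
def IsHolderHalf (f : ℝ → ℝ) : Prop :=
  ∃ K : ℝ, 0 ≤ K ∧ ∀ x y : ℝ, |f x - f y| ≤ K * |x - y| ^ ((1 : ℝ) / 2)

/-- `f` is a 1-periodic function of class `C²` (a `C²` function on the torus `𝕋`). -/
def MemC2T (f : ℝ → ℝ) : Prop :=
  Function.Periodic f 1 ∧ ContDiff ℝ 2 f

/-- `f ∈ C^{2,1/2}(𝕋)`: 1-periodic, of class `C²`, with ½-Hölder continuous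
second derivative. -/
def MemC2HalfT (f : ℝ → ℝ) : Prop :=
  MemC2T f ∧ IsHolderHalf (deriv (deriv f))

/-- `(u, m)` is a solution of Problem 1 with Hamiltonian `H`, potential `V`,
exponent `α` and parameter `ε`: `u, m` are 1-periodic `C²` functions, `m > 0`
everywhere, and the system
`u - u'' + H(u') + V = m^α + ε (m - m'')`,
`m - m'' - (H'(u') m)' = 1 - ε (u - u'')`
holds pointwise. -/
def SolvesMFG (H V : ℝ → ℝ) (α ε : ℝ) (u m : ℝ → ℝ) : Prop :=
  MemC2T u ∧ MemC2T m ∧ (∀ x, 0 < m x) ∧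
  (∀ x : ℝ, u x - deriv (deriv u) x + H (deriv u x) + V x
      = m x ^ α + ε * (m x - deriv (deriv m) x)) ∧
  (∀ x : ℝ, m x - deriv (deriv m) x
      - deriv (fun y => deriv H (deriv u y) * m y) x
      = 1 - ε * (u x - deriv (deriv u) x))

private lemma ftc_per {F f : ℝ → ℝ} (hd : ∀ x, HasDerivAt F (f x) x)
    (hc : Continuous f) (hper : F 1 = F 0) : ∫ x in (0:ℝ)..1, f x = 0 := by
  rw [intervalIntegral.integral_eq_sub_of_hasDerivAt (fun x _ => hd x)
    (hc.intervalIntegrable 0 1), hper, sub_self]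

private lemma per_deriv {f : ℝ → ℝ} (h : Function.Periodic f 1) :
    Function.Periodic (deriv f) 1 := by
  intro x
  have h1 : (fun y => f (y + 1)) = f := funext fun y => h y
  rw [← deriv_comp_add_const f 1 x, h1]

private lemma c2_deriv {f : ℝ → ℝ} (h : ContDiff ℝ 2 f) : ContDiff ℝ 1 (deriv f) := by
  have h2 : ContDiff ℝ (1 + 1) f := by norm_num at h ⊢; exact h
  exact (contDiff_succ_iff_deriv.mp h2).2.2

private lemma int_add {a b : ℝ → ℝ} (ha : Continuous a) (hb : Continuous b) :
    ∫ x in (0:ℝ)..1, (a x + b x) =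
      (∫ x in (0:ℝ)..1, a x) + ∫ x in (0:ℝ)..1, b x :=
  intervalIntegral.integral_add (ha.intervalIntegrable 0 1) (hb.intervalIntegrable 0 1)

private lemma int_sub {a b : ℝ → ℝ} (ha : Continuous a) (hb : Continuous b) :
    ∫ x in (0:ℝ)..1, (a x - b x) =
      (∫ x in (0:ℝ)..1, a x) - ∫ x in (0:ℝ)..1, b x :=
  intervalIntegral.integral_sub (ha.intervalIntegrable 0 1) (hb.intervalIntegrable 0 1)

private lemma int_deriv_zero {f : ℝ → ℝ} (hf : ContDiff ℝ 1 f)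
    (hp : Function.Periodic f 1) : ∫ x in (0:ℝ)..1, deriv f x = 0 :=
  ftc_per (fun x => (hf.differentiable one_ne_zero x).hasDerivAt)
    (hf.continuous_deriv le_rfl) (by simpa using hp 0)

private lemma parts {f g : ℝ → ℝ} (hf : ContDiff ℝ 1 f) (hg : ContDiff ℝ 1 g)
    (hpf : Function.Periodic f 1) (hpg : Function.Periodic g 1) :
    ∫ x in (0:ℝ)..1, f x * deriv g x = - ∫ x in (0:ℝ)..1, deriv f x * g x := by
  have h0 : ∫ x in (0:ℝ)..1, (deriv f x * g x + f x * deriv g x) = 0 :=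
    ftc_per (fun x => ((hf.differentiable one_ne_zero x).hasDerivAt.fun_mul
        (hg.differentiable one_ne_zero x).hasDerivAt))
      (((hf.continuous_deriv le_rfl).fun_mul hg.continuous).fun_add
        (hf.continuous.fun_mul (hg.continuous_deriv le_rfl)))
      (by have h1 := hpf 0; have h2 := hpg 0; norm_num at h1 h2; simp [h1, h2])
  rw [int_add ((hf.continuous_deriv le_rfl).fun_mul hg.continuous)
    (hf.continuous.fun_mul (hg.continuous_deriv le_rfl))] at h0
  linarith

private lemma sq_deriv_bound {H : ℝ → ℝ} {Cbar γ : ℝ} (hCbar : 0 < Cbar)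
    (hγ : 1 < γ) (hA6 : γ < 2)
    (hA7 : ∀ p : ℝ, |deriv H p| ≤ Cbar * (1 + |p| ^ (γ - 1))) (p : ℝ) :
    (deriv H p) ^ 2 ≤ 2 * Cbar ^ 2 * (2 + |p| ^ γ) := by
  have h7 := hA7 p
  have ht0 : (0:ℝ) ≤ |p| ^ (γ - 1) := Real.rpow_nonneg (abs_nonneg p) _
  have ht2 : (|p| ^ (γ - 1)) ^ 2 = |p| ^ (2 * γ - 2) := by
    have h1 : (|p| ^ (γ - 1)) ^ (2:ℕ) = (|p| ^ (γ - 1)) ^ ((2:ℕ):ℝ) :=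
      (Real.rpow_natCast _ 2).symm
    rw [h1, ← Real.rpow_mul (abs_nonneg p)]
    norm_num
    ring_nf
  have ht3 : |p| ^ (2 * γ - 2) ≤ 1 + |p| ^ γ := by
    rcases le_or_gt (|p|) 1 with h | h
    · have h1 := Real.rpow_le_one (abs_nonneg p) h (by linarith : (0:ℝ) ≤ 2 * γ - 2)
      have h0 : (0:ℝ) ≤ |p| ^ γ := Real.rpow_nonneg (abs_nonneg p) _
      linarith
    · have h1 := Real.rpow_le_rpow_of_exponent_le h.le (by linarith : 2 * γ - 2 ≤ γ)
      linarith
  have habs : (deriv H p) ^ 2 ≤ (Cbar * (1 + |p| ^ (γ - 1))) ^ 2 := by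
    have h0 := abs_nonneg (deriv H p)
    nlinarith [sq_abs (deriv H p)]
  have hγ0 : (0:ℝ) ≤ |p| ^ γ := Real.rpow_nonneg (abs_nonneg p) _
  nlinarith [sq_nonneg (1 - |p| ^ (γ - 1)), sq_nonneg Cbar, ht2, ht3, habs, hCbar]

set_option maxHeartbeats 2000000 in
/-- Under assumptions (A1)–(A4), (A6), (A7), if `ε̄₀ > 0` is
such that every solution of Problem 1 with parameter `ε < ε̄₀` satisfies
`sup |ε (u - u'')| < 1/2`, then for every fixed `0 < ε < ε̄₀` there is a
constant `C̃ > 0` such that every solution `(u, m)` of Problem 1 with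
parameter `ε` satisfies `∫₀¹ 1/m ≤ C̃` and `∫₀¹ (m'/m)² ≤ C̃`. -/
theorem integral_bounds_on_inv_m
    (α : ℝ) (hα : 0 < α)
    (H V : ℝ → ℝ) (hH : ContDiff ℝ 2 H)
    (hVcont : Continuous V) (hVper : Function.Periodic V 1)
    (γ C1 C2 C3 : ℝ) (hγ : 1 < γ) (hC1 : 0 < C1) (hC2 : 0 < C2) (hC3 : 0 < C3)
    (hA1 : ∀ p : ℝ, -C1 + C2 * |p| ^ γ ≤ H p ∧ H p ≤ C1 + C3 * |p| ^ γ)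
    (tC1 tC2 tC3 : ℝ) (htC1 : 0 < tC1) (htC2 : 0 < tC2) (htC3 : 0 < tC3)
    (hA2 : ∀ p : ℝ, -tC1 + tC2 * |p| ^ γ ≤ p * deriv H p - H p ∧
        p * deriv H p - H p ≤ tC1 + tC3 * |p| ^ γ)
    (hA3 : ContDiff ℝ 2 V)
    (hA4 : ConvexOn ℝ Set.univ H)
    (hA6 : γ < 2)
    (Cbar : ℝ) (hCbar : 0 < Cbar)
    (hA7 : ∀ p : ℝ, |deriv H p| ≤ Cbar * (1 + |p| ^ (γ - 1)))
    (εbar₀ : ℝ) (hεbar₀ : 0 < εbar₀)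
    (hsmall : ∀ ε : ℝ, 0 < ε → ε ≤ 1 → ε < εbar₀ →
      ∀ u m : ℝ → ℝ, SolvesMFG H V α ε u m →
        ∀ x : ℝ, |ε * (u x - deriv (deriv u) x)| < 1 / 2) :
    ∀ ε : ℝ, 0 < ε → ε ≤ 1 → ε < εbar₀ →
      ∃ Ct > 0, ∀ u m : ℝ → ℝ, SolvesMFG H V α ε u m →
        (∫ x in (0:ℝ)..1, 1 / m x) ≤ Ct ∧
        (∫ x in (0:ℝ)..1, (deriv m x / m x) ^ 2) ≤ Ct := by
  obtain ⟨Vm, hVm0, hVmb⟩ : ∃ Vm : ℝ, 0 ≤ Vm ∧ ∀ x ∈ Icc (0:ℝ) 1, |V x| ≤ Vm := by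
    obtain ⟨xV, -, hb⟩ := isCompact_Icc.exists_isMaxOn (α := ℝ)
      (⟨0, by norm_num⟩ : (Icc (0:ℝ) 1).Nonempty)
      ((hVcont.abs).continuousOn : ContinuousOn (fun x => |V x|) (Icc (0:ℝ) 1))
    exact ⟨|V xV|, abs_nonneg _, fun x hx => hb hx⟩
  intro ε hε0 hε1 hεb
  obtain ⟨K, hKdef⟩ : ∃ K : ℝ, K = 1 / (2 * ε) + (3 / 2) * (tC1 + Vm) := ⟨_, rfl⟩
  obtain ⟨Bγ, hBdef⟩ : ∃ B : ℝ, B = (C1 + 1 + K + 3 / 2 + 1 / (2 * ε) + Vm) / C2 := ⟨_, rfl⟩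
  obtain ⟨S, hSdef⟩ : ∃ S : ℝ, S = 2 * Cbar ^ 2 * (2 + Bγ) := ⟨_, rfl⟩
  have hK0 : 0 < K := by rw [hKdef]; positivity
  have hB0 : 0 < Bγ := by rw [hBdef, hKdef]; positivity
  have hS0 : 0 < S := by rw [hSdef]; positivity
  refine ⟨2 + S, by positivity, ?_⟩
  intro u m hsol
  have hsm := hsmall ε hε0 hε1 hεb u m hsol
  obtain ⟨⟨hup, huC⟩, ⟨hmp, hmC⟩, hmpos, hHJ, hFP⟩ := hsol
  set g : ℝ → ℝ := fun y => deriv H (deriv u y) * m y with hgdef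
  -- regularity facts
  have huC1 : ContDiff ℝ 1 u := huC.of_le (by norm_num)
  have hmC1 : ContDiff ℝ 1 m := hmC.of_le (by norm_num)
  have hu'C : ContDiff ℝ 1 (deriv u) := c2_deriv huC
  have hm'C : ContDiff ℝ 1 (deriv m) := c2_deriv hmC
  have cu : Continuous u := huC.continuous
  have cm : Continuous m := hmC.continuous
  have cu' : Continuous (deriv u) := hu'C.continuous
  have cm' : Continuous (deriv m) := hm'C.continuous
  have cu'' : Continuous (deriv (deriv u)) := hu'C.continuous_deriv le_rfl
  have cm'' : Continuous (deriv (deriv m)) := hm'C.continuous_deriv le_rfl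
  have pu' : Function.Periodic (deriv u) 1 := per_deriv hup
  have pm' : Function.Periodic (deriv m) 1 := per_deriv hmp
  have hH' : ContDiff ℝ 1 (deriv H) := c2_deriv hH
  have hm0 : ∀ x, m x ≠ 0 := fun x => (hmpos x).ne'
  have cdm : Continuous (fun x => deriv (deriv m) x / m x) := cm''.div cm hm0
  have cq : Continuous (fun x => deriv m x / m x) := cm'.div cm hm0
  have cq2 : Continuous (fun x => (deriv m x / m x) ^ 2) := cq.pow 2
  have c1m : Continuous (fun x => 1 / m x) := continuous_const.div cm hm0
  have hFC : ContDiff ℝ 1 (fun x => deriv H (deriv u x)) := hH'.comp hu'C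
  have cF : Continuous (fun x => deriv H (deriv u x)) := hFC.continuous
  have cF' : Continuous (deriv (fun x => deriv H (deriv u x))) :=
    hFC.continuous_deriv le_rfl
  have pF : Function.Periodic (fun x => deriv H (deriv u x)) 1 := fun x => by
    simp only []
    rw [pu' x]
  have hgC : ContDiff ℝ 1 g := by rw [hgdef]; exact hFC.mul hmC1
  have cg : Continuous g := hgC.continuous
  have cg' : Continuous (deriv g) := hgC.continuous_deriv le_rfl
  have pg : Function.Periodic g 1 := fun x => by
    simp only [hgdef]
    rw [pu' x, hmp x]
  have hgderiv : ∀ x, deriv g x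
      = deriv (fun y => deriv H (deriv u y)) x * m x
        + deriv H (deriv u x) * deriv m x := by
    intro x
    rw [hgdef]
    exact deriv_fun_mul ((hFC.differentiable one_ne_zero) x) ((hmC1.differentiable one_ne_zero) x)
  have cgm : Continuous (fun x => deriv g x / m x) := cg'.div cm hm0
  have cH : Continuous H := hH.continuous
  have cHu' : Continuous (fun x => H (deriv u x)) := cH.comp cu'
  have cuγ : Continuous (fun x => |deriv u x| ^ γ) :=
    (cu'.abs).rpow_const (fun x => Or.inr (by positivity : (0:ℝ) ≤ γ))
  have cmα : Continuous (fun x => m x ^ α) :=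
    cm.rpow_const (fun x => Or.inl (hm0 x))
  have cmα1 : Continuous (fun x => m x ^ (α + 1)) :=
    cm.rpow_const (fun x => Or.inl (hm0 x))
  -- zero integrals of derivatives of periodic functions
  have hIu''0 : ∫ x in (0:ℝ)..1, deriv (deriv u) x = 0 := int_deriv_zero hu'C pu'
  have hIm''0 : ∫ x in (0:ℝ)..1, deriv (deriv m) x = 0 := int_deriv_zero hm'C pm'
  have hIg'0 : ∫ x in (0:ℝ)..1, deriv g x = 0 := int_deriv_zero hgC pg
  have hIF'0 : ∫ x in (0:ℝ)..1, deriv (fun x => deriv H (deriv u x)) x = 0 :=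
    int_deriv_zero hFC pF
  ---- Step A: integrate the FP equation
  have hAraw : ∫ x in (0:ℝ)..1, (m x - deriv (deriv m) x - deriv g x)
      = ∫ x in (0:ℝ)..1, (1 - ε * (u x - deriv (deriv u) x)) :=
    intervalIntegral.integral_congr fun x _ => hFP x
  rw [int_sub (cm.fun_sub cm'') cg', int_sub cm cm'', hIm''0, hIg'0] at hAraw
  simp only [sub_zero] at hAraw
  have hRexp : ∫ x in (0:ℝ)..1, (1 - ε * (u x - deriv (deriv u) x))
      = 1 - ε * ∫ x in (0:ℝ)..1, u x := by
    rw [int_sub continuous_const (continuous_const.fun_mul (cu.fun_sub cu'')),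
      intervalIntegral.integral_const_mul, int_sub cu cu'', hIu''0]
    simp
  have hsmub : ∀ x : ℝ, ε * (u x - deriv (deriv u) x) < 1/2 := fun x => (abs_lt.mp (hsm x)).2
  have hsmlb : ∀ x : ℝ, -(1/2) < ε * (u x - deriv (deriv u) x) := fun x => (abs_lt.mp (hsm x)).1
  have hIm_ub : (∫ x in (0:ℝ)..1, m x) ≤ 3/2 := by
    have h1 : ∫ x in (0:ℝ)..1, (1 - ε * (u x - deriv (deriv u) x))
        ≤ ∫ x in (0:ℝ)..1, (3/2 : ℝ) :=
      intervalIntegral.integral_mono_on (by norm_num)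
        (((continuous_const.fun_sub (continuous_const.fun_mul (cu.fun_sub cu''))).intervalIntegrable 0 1))
        (intervalIntegrable_const)
        (fun x _ => by have h := hsmlb x; linarith only [h])
    simp at h1
    linarith only [h1, hAraw]
  have hIm_lb : (1:ℝ)/2 ≤ ∫ x in (0:ℝ)..1, m x := by
    have h1 : ∫ x in (0:ℝ)..1, (1/2 : ℝ)
        ≤ ∫ x in (0:ℝ)..1, (1 - ε * (u x - deriv (deriv u) x)) :=
      intervalIntegral.integral_mono_on (by norm_num)
        (intervalIntegrable_const)
        (((continuous_const.fun_sub (continuous_const.fun_mul (cu.fun_sub cu''))).intervalIntegrable 0 1))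
        (fun x _ => by have h := hsmub x; linarith only [h])
    simp at h1
    linarith only [h1, hAraw]
  have hIm_eq : (∫ x in (0:ℝ)..1, m x) = 1 - ε * ∫ x in (0:ℝ)..1, u x := by
    rw [hAraw, hRexp]
  have hIu_ub : (∫ x in (0:ℝ)..1, u x) ≤ 1 / (2 * ε) := by
    rw [le_div_iff₀ (by positivity : (0:ℝ) < 2 * ε)]
    nlinarith only [hIm_lb, hIm_eq]
  have hIu_lb : -(1 / (2 * ε)) ≤ ∫ x in (0:ℝ)..1, u x := by
    rw [neg_le, le_div_iff₀ (by positivity : (0:ℝ) < 2 * ε)]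
    nlinarith only [hIm_ub, hIm_eq]
  ---- integration by parts identities
  have hparts_mu : ∫ x in (0:ℝ)..1, m x * deriv (deriv u) x
      = - ∫ x in (0:ℝ)..1, deriv m x * deriv u x := parts hmC1 hu'C hmp pu'
  have hparts_um : ∫ x in (0:ℝ)..1, u x * deriv (deriv m) x
      = - ∫ x in (0:ℝ)..1, deriv u x * deriv m x := parts huC1 hm'C hup pm'
  have hparts_ug : ∫ x in (0:ℝ)..1, u x * deriv g x
      = - ∫ x in (0:ℝ)..1, deriv u x * g x := parts huC1 hgC hup pg
  have hparts_mm : ∫ x in (0:ℝ)..1, m x * deriv (deriv m) x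
      = - ∫ x in (0:ℝ)..1, deriv m x * deriv m x := parts hmC1 hm'C hmp pm'
  have hparts_uu : ∫ x in (0:ℝ)..1, u x * deriv (deriv u) x
      = - ∫ x in (0:ℝ)..1, deriv u x * deriv u x := parts huC1 hu'C hup pu'
  have hflip : ∫ x in (0:ℝ)..1, deriv m x * deriv u x
      = ∫ x in (0:ℝ)..1, deriv u x * deriv m x :=
    intervalIntegral.integral_congr fun x _ => mul_comm _ _
  ---- e1 : HJ equation multiplied by m
  have he1 : ∫ x in (0:ℝ)..1, (u x - deriv (deriv u) x + H (deriv u x) + V x) * m x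
      = ∫ x in (0:ℝ)..1, (m x ^ α + ε * (m x - deriv (deriv m) x)) * m x :=
    intervalIntegral.integral_congr fun x _ => by rw [hHJ x]
  have he1L : ∫ x in (0:ℝ)..1, (u x - deriv (deriv u) x + H (deriv u x) + V x) * m x
      = (∫ x in (0:ℝ)..1, u x * m x) - (∫ x in (0:ℝ)..1, m x * deriv (deriv u) x)
        + (∫ x in (0:ℝ)..1, H (deriv u x) * m x) + (∫ x in (0:ℝ)..1, V x * m x) := by
    rw [← int_sub (cu.fun_mul cm) (cm.fun_mul cu''),
      ← int_add ((cu.fun_mul cm).fun_sub (cm.fun_mul cu'')) (cHu'.fun_mul cm),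
      ← int_add (((cu.fun_mul cm).fun_sub (cm.fun_mul cu'')).fun_add (cHu'.fun_mul cm)) (hVcont.fun_mul cm)]
    exact intervalIntegral.integral_congr fun x _ => by ring
  have he1R : ∫ x in (0:ℝ)..1, (m x ^ α + ε * (m x - deriv (deriv m) x)) * m x
      = (∫ x in (0:ℝ)..1, m x ^ (α + 1)) + ε * (∫ x in (0:ℝ)..1, m x * m x)
        - ε * (∫ x in (0:ℝ)..1, m x * deriv (deriv m) x) := by
    rw [← intervalIntegral.integral_const_mul, ← intervalIntegral.integral_const_mul,
      ← int_add cmα1 (continuous_const.fun_mul (cm.fun_mul cm)),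
      ← int_sub (cmα1.fun_add (continuous_const.fun_mul (cm.fun_mul cm)))
        (continuous_const.fun_mul (cm.fun_mul cm''))]
    exact intervalIntegral.integral_congr fun x _ => by
      rw [Real.rpow_add_one (hm0 x)]; ring
  ---- e2 : FP equation multiplied by u
  have he2 : ∫ x in (0:ℝ)..1, (m x - deriv (deriv m) x - deriv g x) * u x
      = ∫ x in (0:ℝ)..1, (1 - ε * (u x - deriv (deriv u) x)) * u x :=
    intervalIntegral.integral_congr fun x _ => by rw [hFP x]
  have he2L : ∫ x in (0:ℝ)..1, (m x - deriv (deriv m) x - deriv g x) * u x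
      = (∫ x in (0:ℝ)..1, u x * m x) - (∫ x in (0:ℝ)..1, u x * deriv (deriv m) x)
        - (∫ x in (0:ℝ)..1, u x * deriv g x) := by
    rw [← int_sub (cu.fun_mul cm) (cu.fun_mul cm''),
      ← int_sub ((cu.fun_mul cm).fun_sub (cu.fun_mul cm'')) (cu.fun_mul cg')]
    exact intervalIntegral.integral_congr fun x _ => by ring
  have he2R : ∫ x in (0:ℝ)..1, (1 - ε * (u x - deriv (deriv u) x)) * u x
      = (∫ x in (0:ℝ)..1, u x) - ε * (∫ x in (0:ℝ)..1, u x * u x)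
        + ε * (∫ x in (0:ℝ)..1, u x * deriv (deriv u) x) := by
    rw [← intervalIntegral.integral_const_mul, ← intervalIntegral.integral_const_mul,
      ← int_sub cu (continuous_const.fun_mul (cu.fun_mul cu)),
      ← int_add (cu.fun_sub (continuous_const.fun_mul (cu.fun_mul cu)))
        (continuous_const.fun_mul (cu.fun_mul cu''))]
    exact intervalIntegral.integral_congr fun x _ => by ring
  ---- nonnegativity of square integrals
  have hImm0 : 0 ≤ ∫ x in (0:ℝ)..1, m x * m x :=
    intervalIntegral.integral_nonneg (by norm_num) fun x _ => mul_self_nonneg _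
  have hIm'm'0 : 0 ≤ ∫ x in (0:ℝ)..1, deriv m x * deriv m x :=
    intervalIntegral.integral_nonneg (by norm_num) fun x _ => mul_self_nonneg _
  have hIuu0 : 0 ≤ ∫ x in (0:ℝ)..1, u x * u x :=
    intervalIntegral.integral_nonneg (by norm_num) fun x _ => mul_self_nonneg _
  have hIu'u'0 : 0 ≤ ∫ x in (0:ℝ)..1, deriv u x * deriv u x :=
    intervalIntegral.integral_nonneg (by norm_num) fun x _ => mul_self_nonneg _
  ---- lower bound on the Lagrangian term, upper bound on the potential term
  have hIu'g_lb : -(tC1 * (3/2)) ≤ (∫ x in (0:ℝ)..1, deriv u x * g x)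
      - ∫ x in (0:ℝ)..1, H (deriv u x) * m x := by
    have hpt : ∀ x ∈ Icc (0:ℝ) 1,
        -tC1 * m x ≤ deriv u x * g x - H (deriv u x) * m x := by
      intro x _
      have h2 := (hA2 (deriv u x)).1
      have hγ0 : (0:ℝ) ≤ |deriv u x| ^ γ := Real.rpow_nonneg (abs_nonneg _) _
      have hmx := (hmpos x).le
      have h3 := mul_le_mul_of_nonneg_right h2 hmx
      simp only [hgdef]
      nlinarith only [h3, mul_nonneg (mul_nonneg htC2.le hγ0) hmx]
    have h1 : ∫ x in (0:ℝ)..1, -tC1 * m x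
        ≤ ∫ x in (0:ℝ)..1, (deriv u x * g x - H (deriv u x) * m x) :=
      intervalIntegral.integral_mono_on (by norm_num)
        ((continuous_const.fun_mul cm).intervalIntegrable 0 1)
        (((cu'.fun_mul cg).fun_sub (cHu'.fun_mul cm)).intervalIntegrable 0 1) hpt
    rw [intervalIntegral.integral_const_mul,
      int_sub (cu'.fun_mul cg) (cHu'.fun_mul cm)] at h1
    nlinarith only [h1, mul_le_mul_of_nonneg_left hIm_ub htC1.le]
  have hIVm_ub : (∫ x in (0:ℝ)..1, V x * m x) ≤ Vm * (3/2) := by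
    have h1 : ∫ x in (0:ℝ)..1, V x * m x ≤ ∫ x in (0:ℝ)..1, Vm * m x :=
      intervalIntegral.integral_mono_on (by norm_num)
        ((hVcont.fun_mul cm).intervalIntegrable 0 1)
        ((continuous_const.fun_mul cm).intervalIntegrable 0 1)
        (fun x hx => mul_le_mul_of_nonneg_right (le_of_abs_le (hVmb x hx)) (hmpos x).le)
    rw [intervalIntegral.integral_const_mul] at h1
    nlinarith only [h1, mul_le_mul_of_nonneg_left hIm_ub hVm0]
  ---- the cross estimate: ∫ m^(α+1) ≤ K
  have hc1 := he1
  rw [he1L, he1R, hparts_mu, hparts_mm, hflip] at hc1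
  have hc2 := he2
  rw [he2L, he2R, hparts_um, hparts_ug, hparts_uu] at hc2
  have hImα1_ub : (∫ x in (0:ℝ)..1, m x ^ (α + 1)) ≤ K := by
    have h1 : 0 ≤ ε * ∫ x in (0:ℝ)..1, m x * m x := mul_nonneg hε0.le hImm0
    have h2 : 0 ≤ ε * ∫ x in (0:ℝ)..1, deriv m x * deriv m x := mul_nonneg hε0.le hIm'm'0
    have h3 : 0 ≤ ε * ∫ x in (0:ℝ)..1, u x * u x := mul_nonneg hε0.le hIuu0
    have h4 : 0 ≤ ε * ∫ x in (0:ℝ)..1, deriv u x * deriv u x := mul_nonneg hε0.le hIu'u'0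
    rw [hKdef]
    linarith only [hc1, hc2, hIu'g_lb, hIVm_ub, hIu_ub, h1, h2, h3, h4]
  ---- Step C : integrate the HJ equation, bound ∫ |u'|^γ
  have heH : ∫ x in (0:ℝ)..1, (u x - deriv (deriv u) x + H (deriv u x) + V x)
      = ∫ x in (0:ℝ)..1, (m x ^ α + ε * (m x - deriv (deriv m) x)) :=
    intervalIntegral.integral_congr fun x _ => hHJ x
  have heHL : ∫ x in (0:ℝ)..1, (u x - deriv (deriv u) x + H (deriv u x) + V x)
      = (∫ x in (0:ℝ)..1, u x) - (∫ x in (0:ℝ)..1, deriv (deriv u) x)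
        + (∫ x in (0:ℝ)..1, H (deriv u x)) + (∫ x in (0:ℝ)..1, V x) := by
    rw [← int_sub cu cu'', ← int_add (cu.fun_sub cu'') cHu',
      ← int_add ((cu.fun_sub cu'').fun_add cHu') hVcont]
  have heHR : ∫ x in (0:ℝ)..1, (m x ^ α + ε * (m x - deriv (deriv m) x))
      = (∫ x in (0:ℝ)..1, m x ^ α)
        + ε * ((∫ x in (0:ℝ)..1, m x) - ∫ x in (0:ℝ)..1, deriv (deriv m) x) := by
    rw [← int_sub cm cm'', ← intervalIntegral.integral_const_mul,
      ← int_add cmα (continuous_const.fun_mul (cm.fun_sub cm''))]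
  rw [heHL, heHR, hIu''0, hIm''0] at heH
  have hIHu_lb : -C1 + C2 * (∫ x in (0:ℝ)..1, |deriv u x| ^ γ)
      ≤ ∫ x in (0:ℝ)..1, H (deriv u x) := by
    have h1 : ∫ x in (0:ℝ)..1, (-C1 + C2 * |deriv u x| ^ γ)
        ≤ ∫ x in (0:ℝ)..1, H (deriv u x) :=
      intervalIntegral.integral_mono_on (by norm_num)
        ((continuous_const.fun_add (continuous_const.fun_mul cuγ)).intervalIntegrable 0 1)
        (cHu'.intervalIntegrable 0 1) (fun x _ => (hA1 _).1)
    rw [int_add continuous_const (continuous_const.fun_mul cuγ),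
      intervalIntegral.integral_const_mul] at h1
    simp only [intervalIntegral.integral_const, smul_eq_mul, sub_zero, one_mul] at h1
    linarith only [h1]
  have hImα_ub : (∫ x in (0:ℝ)..1, m x ^ α) ≤ 1 + ∫ x in (0:ℝ)..1, m x ^ (α + 1) := by
    have hpt : ∀ x ∈ Icc (0:ℝ) 1, m x ^ α ≤ 1 + m x ^ (α + 1) := by
      intro x _
      rcases le_or_gt (m x) 1 with h | h
      · have h1 := Real.rpow_le_one (hmpos x).le h hα.le
        have h2 : (0:ℝ) ≤ m x ^ (α + 1) := Real.rpow_nonneg (hmpos x).le _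
        linarith only [h1, h2]
      · have h1 := Real.rpow_le_rpow_of_exponent_le h.le (by linarith only [hα] : α ≤ α + 1)
        linarith only [h1]
    have h1 : (∫ x in (0:ℝ)..1, m x ^ α) ≤ ∫ x in (0:ℝ)..1, (1 + m x ^ (α + 1)) :=
      intervalIntegral.integral_mono_on (by norm_num : (0:ℝ) ≤ 1)
        (cmα.intervalIntegrable 0 1) ((continuous_const.fun_add cmα1).intervalIntegrable 0 1) hpt
    rw [int_add continuous_const cmα1] at h1
    simp only [intervalIntegral.integral_const, smul_eq_mul, sub_zero, one_mul] at h1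
    linarith only [h1]
  have hIV_lb : -Vm ≤ ∫ x in (0:ℝ)..1, V x := by
    have h1 : ∫ x in (0:ℝ)..1, (-Vm) ≤ ∫ x in (0:ℝ)..1, V x :=
      intervalIntegral.integral_mono_on (by norm_num)
        (intervalIntegrable_const) (hVcont.intervalIntegrable 0 1)
        (fun x hx => neg_le_of_abs_le (hVmb x hx))
    simpa using h1
  have hIγ_ub : (∫ x in (0:ℝ)..1, |deriv u x| ^ γ) ≤ Bγ := by
    rw [hBdef, le_div_iff₀ hC2]
    have hεIm : ε * ∫ x in (0:ℝ)..1, m x ≤ 3/2 := by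
      have hIm00 : 0 ≤ ∫ x in (0:ℝ)..1, m x := by linarith only [hIm_lb]
      have hh := mul_le_mul_of_nonneg_right hε1 hIm00
      linarith only [hh, hIm_ub]
    linarith only [heH, hIHu_lb, hImα_ub, hIV_lb, hImα1_ub, hIu_lb, hεIm]
  ---- Step D : bound ∫ (H'(u'))²
  have hIF2_ub : (∫ x in (0:ℝ)..1, (deriv H (deriv u x)) ^ 2) ≤ S := by
    have h1 : ∫ x in (0:ℝ)..1, (deriv H (deriv u x)) ^ 2
        ≤ ∫ x in (0:ℝ)..1, 2 * Cbar ^ 2 * (2 + |deriv u x| ^ γ) :=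
      intervalIntegral.integral_mono_on (by norm_num)
        ((cF.pow 2).intervalIntegrable 0 1)
        ((continuous_const.fun_mul (continuous_const.fun_add cuγ)).intervalIntegrable 0 1)
        (fun x _ => sq_deriv_bound hCbar hγ hA6 hA7 (deriv u x))
    rw [intervalIntegral.integral_const_mul, int_add continuous_const cuγ] at h1
    simp only [intervalIntegral.integral_const, smul_eq_mul, sub_zero, one_mul] at h1
    rw [hSdef]
    nlinarith only [h1, hIγ_ub, sq_nonneg Cbar]
  ---- Step E : the FP equation divided by m
  have hI1 : (∫ x in (0:ℝ)..1, deriv (deriv m) x / m x)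
      = ∫ x in (0:ℝ)..1, (deriv m x / m x) ^ 2 := by
    have h0 : ∫ x in (0:ℝ)..1,
        (deriv (deriv m) x / m x - (deriv m x / m x) ^ 2) = 0 := by
      apply ftc_per (F := fun x => deriv m x / m x)
      · intro x
        have hd := ((hm'C.differentiable one_ne_zero x).hasDerivAt.fun_div
          ((hmC1.differentiable one_ne_zero x).hasDerivAt) (hm0 x))
        refine hd.congr_deriv ?_
        field_simp [hm0 x]
      · exact cdm.fun_sub cq2
      · have h1 := pm' 0
        have h2 := hmp 0
        norm_num at h1 h2
        simp [h1, h2]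
    rw [int_sub cdm cq2] at h0
    linarith only [h0]
  have hI2 : (∫ x in (0:ℝ)..1, deriv g x / m x)
      = ∫ x in (0:ℝ)..1, deriv H (deriv u x) * (deriv m x / m x) := by
    have h1 : ∫ x in (0:ℝ)..1, deriv g x / m x
        = ∫ x in (0:ℝ)..1, (deriv (fun y => deriv H (deriv u y)) x
            + deriv H (deriv u x) * (deriv m x / m x)) :=
      intervalIntegral.integral_congr fun x _ => by
        rw [hgderiv x]
        field_simp [hm0 x]
    rw [h1, int_add cF' (cF.fun_mul cq), hIF'0, zero_add]
  have hEmain : ∫ x in (0:ℝ)..1, (m x - deriv (deriv m) x - deriv g x) / m x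
      = ∫ x in (0:ℝ)..1, (1 - ε * (u x - deriv (deriv u) x)) * (1 / m x) :=
    intervalIntegral.integral_congr fun x _ => by rw [hFP x]; ring
  have hEL : ∫ x in (0:ℝ)..1, (m x - deriv (deriv m) x - deriv g x) / m x
      = (∫ x in (0:ℝ)..1, (1:ℝ)) - (∫ x in (0:ℝ)..1, deriv (deriv m) x / m x)
        - ∫ x in (0:ℝ)..1, deriv g x / m x := by
    rw [← int_sub continuous_const cdm, ← int_sub (continuous_const.fun_sub cdm) cgm]
    exact intervalIntegral.integral_congr fun x _ => by
      field_simp [hm0 x]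
  have hER : (1/2) * (∫ x in (0:ℝ)..1, 1 / m x)
      ≤ ∫ x in (0:ℝ)..1, (1 - ε * (u x - deriv (deriv u) x)) * (1 / m x) := by
    rw [← intervalIntegral.integral_const_mul]
    apply intervalIntegral.integral_mono_on (by norm_num)
      ((continuous_const.fun_mul c1m).intervalIntegrable 0 1)
      (((continuous_const.fun_sub (continuous_const.fun_mul (cu.fun_sub cu''))).fun_mul c1m).intervalIntegrable 0 1)
    intro x _
    exact mul_le_mul_of_nonneg_right (by linarith only [hsmub x])
      (one_div_nonneg.mpr (hmpos x).le)
  have hAM : -(∫ x in (0:ℝ)..1, deriv H (deriv u x) * (deriv m x / m x))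
      ≤ ((∫ x in (0:ℝ)..1, (deriv H (deriv u x)) ^ 2)
          + ∫ x in (0:ℝ)..1, (deriv m x / m x) ^ 2) / 2 := by
    have h1 : ∫ x in (0:ℝ)..1, -(deriv H (deriv u x) * (deriv m x / m x))
        ≤ ∫ x in (0:ℝ)..1,
            ((deriv H (deriv u x)) ^ 2 + (deriv m x / m x) ^ 2) / 2 :=
      intervalIntegral.integral_mono_on (by norm_num)
        (((cF.fun_mul cq).neg).intervalIntegrable 0 1)
        ((((cF.pow 2).fun_add cq2).div_const 2).intervalIntegrable 0 1)
        (fun x _ => by nlinarith only [sq_nonneg (deriv H (deriv u x) + deriv m x / m x)])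
    rw [intervalIntegral.integral_neg, intervalIntegral.integral_div,
      int_add (a := fun x => deriv H (deriv u x) ^ 2) (cF.pow 2) cq2] at h1
    exact h1
  have hJ0 : 0 ≤ ∫ x in (0:ℝ)..1, 1 / m x :=
    intervalIntegral.integral_nonneg (by norm_num)
      (fun x _ => one_div_nonneg.mpr (hmpos x).le)
  have hI0 : 0 ≤ ∫ x in (0:ℝ)..1, (deriv m x / m x) ^ 2 :=
    intervalIntegral.integral_nonneg (by norm_num) (fun x _ => sq_nonneg _)
  have hone : (∫ x in (0:ℝ)..1, (1:ℝ)) = 1 := by simp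
  have hchain : (1/2) * (∫ x in (0:ℝ)..1, 1 / m x)
      ≤ 1 - (∫ x in (0:ℝ)..1, (deriv m x / m x) ^ 2)
        - ∫ x in (0:ℝ)..1, deriv H (deriv u x) * (deriv m x / m x) := by
    have h2 : ∫ x in (0:ℝ)..1, (m x - deriv (deriv m) x - deriv g x) / m x
        = 1 - (∫ x in (0:ℝ)..1, (deriv m x / m x) ^ 2)
          - ∫ x in (0:ℝ)..1, deriv H (deriv u x) * (deriv m x / m x) := by
      rw [hEL, hI1, hI2, hone]
    linarith only [hER, h2, hEmain]
  constructor
  · linarith only [hchain, hAM, hIF2_ub, hI0]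
  · linarith only [hchain, hAM, hIF2_ub, hJ0]
end
end

section
/- Suppose V is of class C² (assumption (A3)). Then for every 0 < ε ≤ 1 and every solution (u, m) of Problem 1, the following integral identity holds: ∫₀¹ H''(u')·m·(u'')² dx + ∫₀¹ α·m^{α−1}·(m')² dx + ε ∫₀¹ ((m')² + (m'')² + (u')² + (u'')²) dx = −∫₀¹ V·m'' dx. -/
open Set intervalIntegral

noncomputable section

/-- derivative of a 1-periodic function is 1-periodic -/
lemma periodic_deriv' (f : ℝ → ℝ) (h : Function.Periodic f 1) :
    Function.Periodic (deriv f) 1 := by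
  intro x
  rw [← deriv_comp_add_const]
  congr 1
  funext y
  exact h y

/-- integration by parts on `[0,1]` with equal boundary values -/
lemma ibp' {f g f' g' : ℝ → ℝ}
    (hf : ∀ x, HasDerivAt f (f' x) x) (hg : ∀ x, HasDerivAt g (g' x) x)
    (hcf : Continuous f') (hcg : Continuous g')
    (hf0 : f 1 = f 0) (hg0 : g 1 = g 0) :
    ∫ x in (0:ℝ)..1, f x * g' x = -∫ x in (0:ℝ)..1, f' x * g x := by
  have h := intervalIntegral.integral_mul_deriv_eq_deriv_mul
    (fun x _ => hf x) (fun x _ => hg x)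
    (hcf.intervalIntegrable 0 1) (hcg.intervalIntegrable 0 1)
  rw [h, hf0, hg0]; ring

/-- If `V` is 1-periodic and of class `C²`, then for every
`0 < ε ≤ 1` and every solution `(u, m)` of Problem 1, the integral identity
`∫₀¹ H''(u') m u''² + ∫₀¹ α m^{α-1} m'² + ε ∫₀¹ (m'² + m''² + u'² + u''²)
  = -∫₀¹ V m''` holds. -/
theorem second_order_identity
    (α : ℝ) (hα : 0 < α)
    (H V : ℝ → ℝ) (hH : ContDiff ℝ 2 H)
    (hVper : Function.Periodic V 1) (hA3 : ContDiff ℝ 2 V) :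
    ∀ ε : ℝ, 0 < ε → ε ≤ 1 → ∀ u m : ℝ → ℝ, SolvesMFG H V α ε u m →
      (∫ x in (0:ℝ)..1,
          deriv (deriv H) (deriv u x) * m x * (deriv (deriv u) x) ^ 2)
        + (∫ x in (0:ℝ)..1, α * m x ^ (α - 1) * (deriv m x) ^ 2)
        + ε * (∫ x in (0:ℝ)..1,
            ((deriv m x) ^ 2 + (deriv (deriv m) x) ^ 2
              + (deriv u x) ^ 2 + (deriv (deriv u) x) ^ 2))
      = -(∫ x in (0:ℝ)..1, V x * deriv (deriv m) x) := by
  intro ε hε0 hε1 u m hsol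
  obtain ⟨⟨huper, hu⟩, ⟨hmper, hm⟩, hmpos, heq1, heq2⟩ := hsol
  -- differentiability
  have hud : Differentiable ℝ u := hu.differentiable two_ne_zero
  have hmd : Differentiable ℝ m := hm.differentiable two_ne_zero
  have hHd : Differentiable ℝ H := hH.differentiable two_ne_zero
  have huc1 : ContDiff ℝ 1 (deriv u) := by
    rw [← one_add_one_eq_two, contDiff_succ_iff_deriv] at hu
    exact hu.2.2
  have hmc1 : ContDiff ℝ 1 (deriv m) := by
    rw [← one_add_one_eq_two, contDiff_succ_iff_deriv] at hm
    exact hm.2.2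
  have hHc1 : ContDiff ℝ 1 (deriv H) := by
    rw [← one_add_one_eq_two, contDiff_succ_iff_deriv] at hH
    exact hH.2.2
  have Hu1 : ∀ x, HasDerivAt u (deriv u x) x := fun x => (hud x).hasDerivAt
  have Hm1 : ∀ x, HasDerivAt m (deriv m x) x := fun x => (hmd x).hasDerivAt
  have Hu2 : ∀ x, HasDerivAt (deriv u) (deriv (deriv u) x) x :=
    fun x => (huc1.differentiable one_ne_zero x).hasDerivAt
  have Hm2 : ∀ x, HasDerivAt (deriv m) (deriv (deriv m) x) x :=
    fun x => (hmc1.differentiable one_ne_zero x).hasDerivAt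
  -- continuity
  have cu : Continuous u := hud.continuous
  have cm : Continuous m := hmd.continuous
  have cV : Continuous V := hA3.continuous
  have cu1 : Continuous (deriv u) := huc1.continuous
  have cm1 : Continuous (deriv m) := hmc1.continuous
  have cu2 : Continuous (deriv (deriv u)) := huc1.continuous_deriv le_rfl
  have cm2 : Continuous (deriv (deriv m)) := hmc1.continuous_deriv le_rfl
  have cH1 : Continuous (deriv H) := hHc1.continuous
  have cH2 : Continuous (deriv (deriv H)) := hHc1.continuous_deriv le_rfl
  have cmα : Continuous (fun x => m x ^ α) :=
    cm.rpow_const (fun x => Or.inl (hmpos x).ne')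
  have cmα1 : Continuous (fun x => m x ^ (α - 1)) :=
    cm.rpow_const (fun x => Or.inl (hmpos x).ne')
  have cHu1 : Continuous (fun x => H (deriv u x)) := hH.continuous.comp cu1
  have cH'u1 : Continuous (fun x => deriv H (deriv u x)) := cH1.comp cu1
  have cH''u1 : Continuous (fun x => deriv (deriv H) (deriv u x)) := cH2.comp cu1
  -- boundary values
  have bu : u 1 = u 0 := by simpa using huper 0
  have bm : m 1 = m 0 := by simpa using hmper 0
  have bu1 : deriv u 1 = deriv u 0 := by simpa using (periodic_deriv' u huper) 0
  have bm1 : deriv m 1 = deriv m 0 := by simpa using (periodic_deriv' m hmper) 0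
  -- composite derivatives
  have HmA : ∀ x, HasDerivAt (fun y => m y ^ α)
      (α * m x ^ (α - 1) * deriv m x) x := fun x =>
    (Real.hasDerivAt_rpow_const (Or.inl (hmpos x).ne')).comp x (Hm1 x)
  have HHu : ∀ x, HasDerivAt (fun y => H (deriv u y))
      (deriv H (deriv u x) * deriv (deriv u) x) x := fun x =>
    ((hHd (deriv u x)).hasDerivAt).comp x (Hu2 x)
  have HH'u : ∀ x, HasDerivAt (fun y => deriv H (deriv u y))
      (deriv (deriv H) (deriv u x) * deriv (deriv u) x) x := fun x =>
    ((hHc1.differentiable one_ne_zero (deriv u x)).hasDerivAt).comp x (Hu2 x)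
  have hDeq : ∀ x, deriv (fun y => deriv H (deriv u y) * m y) x
      = deriv (deriv H) (deriv u x) * deriv (deriv u) x * m x
        + deriv H (deriv u x) * deriv m x := fun x =>
    ((HH'u x).mul (Hm1 x)).deriv
  -- integration by parts identities
  have E3 : (∫ x in (0:ℝ)..1, m x ^ α * deriv (deriv m) x)
      = -∫ x in (0:ℝ)..1, α * m x ^ (α - 1) * (deriv m x) ^ 2 := by
    rw [ibp' HmA Hm2 ((continuous_const.mul cmα1).mul cm1) cm2
      (show m 1 ^ α = m 0 ^ α by rw [bm]) bm1]
    congr 1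
    exact intervalIntegral.integral_congr fun x _ => by ring
  have E4 : (∫ x in (0:ℝ)..1, m x * deriv (deriv m) x)
      = -∫ x in (0:ℝ)..1, (deriv m x) ^ 2 := by
    rw [ibp' Hm1 Hm2 cm1 cm2 bm bm1]
    congr 1
    exact intervalIntegral.integral_congr fun x _ => by ring
  have E5 : (∫ x in (0:ℝ)..1, u x * deriv (deriv m) x)
      = -∫ x in (0:ℝ)..1, deriv u x * deriv m x :=
    ibp' Hu1 Hm2 cu1 cm2 bu bm1
  have E6 : (∫ x in (0:ℝ)..1, H (deriv u x) * deriv (deriv m) x)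
      = -∫ x in (0:ℝ)..1, deriv H (deriv u x) * deriv (deriv u) x * deriv m x := by
    rw [ibp' HHu Hm2 (cH'u1.mul cu2) cm2
      (show H (deriv u 1) = H (deriv u 0) by rw [bu1]) bm1]
  have E7 : (∫ x in (0:ℝ)..1, m x * deriv (deriv u) x)
      = -∫ x in (0:ℝ)..1, deriv u x * deriv m x := by
    rw [ibp' Hm1 Hu2 cm1 cu2 bm bu1]
    congr 1
    exact intervalIntegral.integral_congr fun x _ => by ring
  have E8 : (∫ x in (0:ℝ)..1, deriv (deriv u) x) = 0 := by
    rw [intervalIntegral.integral_eq_sub_of_hasDerivAt (fun x _ => Hu2 x)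
      (cu2.intervalIntegrable 0 1), bu1, sub_self]
  have E9 : (∫ x in (0:ℝ)..1, u x * deriv (deriv u) x)
      = -∫ x in (0:ℝ)..1, (deriv u x) ^ 2 := by
    rw [ibp' Hu1 Hu2 cu1 cu2 bu bu1]
    congr 1
    exact intervalIntegral.integral_congr fun x _ => by ring
  -- the first equation multiplied by m'' and integrated
  have E1 : (∫ x in (0:ℝ)..1, V x * deriv (deriv m) x)
      = (∫ x in (0:ℝ)..1, m x ^ α * deriv (deriv m) x)
        + ε * (∫ x in (0:ℝ)..1, m x * deriv (deriv m) x)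
        - ε * (∫ x in (0:ℝ)..1, (deriv (deriv m) x) ^ 2)
        - (∫ x in (0:ℝ)..1, u x * deriv (deriv m) x)
        + (∫ x in (0:ℝ)..1, deriv (deriv u) x * deriv (deriv m) x)
        - (∫ x in (0:ℝ)..1, H (deriv u x) * deriv (deriv m) x) := by
    have hpt : EqOn (fun x => V x * deriv (deriv m) x)
        (fun x => m x ^ α * deriv (deriv m) x
          + ε * (m x * deriv (deriv m) x)
          - ε * ((deriv (deriv m) x) ^ 2)
          - u x * deriv (deriv m) x
          + deriv (deriv u) x * deriv (deriv m) x
          - H (deriv u x) * deriv (deriv m) x) (uIcc 0 1) := fun x _ => by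
      linear_combination (deriv (deriv m) x) * (heq1 x)
    have iA : IntervalIntegrable (fun x => m x ^ α * deriv (deriv m) x)
        MeasureTheory.volume 0 1 := (cmα.mul cm2).intervalIntegrable 0 1
    have iB : IntervalIntegrable (fun x => ε * (m x * deriv (deriv m) x))
        MeasureTheory.volume 0 1 :=
      (continuous_const.mul (cm.mul cm2)).intervalIntegrable 0 1
    have iC : IntervalIntegrable (fun x => ε * ((deriv (deriv m) x) ^ 2))
        MeasureTheory.volume 0 1 :=
      (continuous_const.mul (cm2.pow 2)).intervalIntegrable 0 1
    have iD : IntervalIntegrable (fun x => u x * deriv (deriv m) x)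
        MeasureTheory.volume 0 1 := (cu.mul cm2).intervalIntegrable 0 1
    have iE : IntervalIntegrable (fun x => deriv (deriv u) x * deriv (deriv m) x)
        MeasureTheory.volume 0 1 := (cu2.mul cm2).intervalIntegrable 0 1
    have iF : IntervalIntegrable (fun x => H (deriv u x) * deriv (deriv m) x)
        MeasureTheory.volume 0 1 := (cHu1.mul cm2).intervalIntegrable 0 1
    rw [intervalIntegral.integral_congr hpt,
      intervalIntegral.integral_sub ((((iA.add iB).sub iC).sub iD).add iE) iF,
      intervalIntegral.integral_add (((iA.add iB).sub iC).sub iD) iE,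
      intervalIntegral.integral_sub ((iA.add iB).sub iC) iD,
      intervalIntegral.integral_sub (iA.add iB) iC,
      intervalIntegral.integral_add iA iB,
      intervalIntegral.integral_const_mul, intervalIntegral.integral_const_mul]
  -- the second equation multiplied by u'' and integrated
  have E2 : (∫ x in (0:ℝ)..1, m x * deriv (deriv u) x)
      = (∫ x in (0:ℝ)..1, deriv (deriv u) x * deriv (deriv m) x)
        + (∫ x in (0:ℝ)..1,
            deriv (deriv H) (deriv u x) * m x * (deriv (deriv u) x) ^ 2)
        + (∫ x in (0:ℝ)..1, deriv H (deriv u x) * deriv (deriv u) x * deriv m x)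
        + (∫ x in (0:ℝ)..1, deriv (deriv u) x)
        - ε * (∫ x in (0:ℝ)..1, u x * deriv (deriv u) x)
        + ε * (∫ x in (0:ℝ)..1, (deriv (deriv u) x) ^ 2) := by
    have hpt : EqOn (fun x => m x * deriv (deriv u) x)
        (fun x => deriv (deriv u) x * deriv (deriv m) x
          + deriv (deriv H) (deriv u x) * m x * (deriv (deriv u) x) ^ 2
          + deriv H (deriv u x) * deriv (deriv u) x * deriv m x
          + deriv (deriv u) x
          - ε * (u x * deriv (deriv u) x)
          + ε * ((deriv (deriv u) x) ^ 2)) (uIcc 0 1) := fun x _ => by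
      have h2 := heq2 x
      rw [hDeq x] at h2
      linear_combination (deriv (deriv u) x) * h2
    have iA : IntervalIntegrable (fun x => deriv (deriv u) x * deriv (deriv m) x)
        MeasureTheory.volume 0 1 := (cu2.mul cm2).intervalIntegrable 0 1
    have iB : IntervalIntegrable
        (fun x => deriv (deriv H) (deriv u x) * m x * (deriv (deriv u) x) ^ 2)
        MeasureTheory.volume 0 1 :=
      ((cH''u1.mul cm).mul (cu2.pow 2)).intervalIntegrable 0 1
    have iC : IntervalIntegrable
        (fun x => deriv H (deriv u x) * deriv (deriv u) x * deriv m x)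
        MeasureTheory.volume 0 1 :=
      ((cH'u1.mul cu2).mul cm1).intervalIntegrable 0 1
    have iD : IntervalIntegrable (fun x => deriv (deriv u) x)
        MeasureTheory.volume 0 1 := cu2.intervalIntegrable 0 1
    have iE : IntervalIntegrable (fun x => ε * (u x * deriv (deriv u) x))
        MeasureTheory.volume 0 1 :=
      (continuous_const.mul (cu.mul cu2)).intervalIntegrable 0 1
    have iF : IntervalIntegrable (fun x => ε * ((deriv (deriv u) x) ^ 2))
        MeasureTheory.volume 0 1 :=
      (continuous_const.mul (cu2.pow 2)).intervalIntegrable 0 1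
    rw [intervalIntegral.integral_congr hpt,
      intervalIntegral.integral_add ((((iA.add iB).add iC).add iD).sub iE) iF,
      intervalIntegral.integral_sub (((iA.add iB).add iC).add iD) iE,
      intervalIntegral.integral_add ((iA.add iB).add iC) iD,
      intervalIntegral.integral_add (iA.add iB) iC,
      intervalIntegral.integral_add iA iB,
      intervalIntegral.integral_const_mul, intervalIntegral.integral_const_mul]
  -- split the combined integral in the goal
  have hsplit : (∫ x in (0:ℝ)..1,
        ((deriv m x) ^ 2 + (deriv (deriv m) x) ^ 2
          + (deriv u x) ^ 2 + (deriv (deriv u) x) ^ 2))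
      = (∫ x in (0:ℝ)..1, (deriv m x) ^ 2)
        + (∫ x in (0:ℝ)..1, (deriv (deriv m) x) ^ 2)
        + (∫ x in (0:ℝ)..1, (deriv u x) ^ 2)
        + (∫ x in (0:ℝ)..1, (deriv (deriv u) x) ^ 2) := by
    have i1 : IntervalIntegrable (fun x => (deriv m x) ^ 2)
        MeasureTheory.volume 0 1 := (cm1.pow 2).intervalIntegrable 0 1
    have i2 : IntervalIntegrable (fun x => (deriv (deriv m) x) ^ 2)
        MeasureTheory.volume 0 1 := (cm2.pow 2).intervalIntegrable 0 1
    have i3 : IntervalIntegrable (fun x => (deriv u x) ^ 2)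
        MeasureTheory.volume 0 1 := (cu1.pow 2).intervalIntegrable 0 1
    have i4 : IntervalIntegrable (fun x => (deriv (deriv u) x) ^ 2)
        MeasureTheory.volume 0 1 := (cu2.pow 2).intervalIntegrable 0 1
    rw [intervalIntegral.integral_add ((i1.add i2).add i3) i4,
      intervalIntegral.integral_add (i1.add i2) i3,
      intervalIntegral.integral_add i1 i2]
  rw [hsplit]
  linear_combination E1 - E2 + E3 + ε * E4 - E5 - E6 + E7 - E8 + ε * E9
end
end
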